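/- Let d_1, ..., d_n ∈ [0,1), let D = diag(d_1,...,d_n), and let C be the adjacency matrix of the directed n-cycle 1→2→...→n→1 (i.e., the cyclic permutation matrix). Let T = D + (I−D)C. Then T is stochastic, 1 is an algebraically simple eigenvalue of T, and Kemeny's constant of T equals (1/(2 Σ_{j=1}^n 1/(1−d_j))) · ((Σ_{j=1}^n 1/(1−d_j))^2 − Σ_{j=1}^n 1/(1−d_j)^2). -/

import Mathlib

open Finset Matrix

/-- A matrix is (row) stochastic: entrywise nonnegative with all row sums one. -/
def IsStochastic {n : ℕ} (T : Matrix (Fin n) (Fin n) ℝ) : Prop :=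
  (∀ i j, 0 ≤ T i j) ∧ ∀ i, ∑ j, T i j = 1

/-- Kemeny's constant: `∑_{λ ≠ 1} 1/(1-λ)` over the complex eigenvalues of `T`
(roots of the characteristic polynomial, with multiplicity, with one copy of the
eigenvalue 1 removed). -/
noncomputable def kemeny {n : ℕ} (T : Matrix (Fin n) (Fin n) ℝ) : ℝ :=
  ((((Matrix.charpoly (T.map (Complex.ofReal))).roots.erase 1).map
      (fun z => (1 - z)⁻¹)).sum).re

namespace KemenyAux

open Polynomial

lemma fin_one_ne_zero' {n : ℕ} [NeZero n] (hn : 2 ≤ n) : (1 : Fin n) ≠ 0 := by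
  intro h
  have := congrArg Fin.val h
  simp [Fin.val_one'] at this
  omega

open Fin.NatCast Fin.CommRing in
lemma perm_classify {n : ℕ} [NeZero n] (hn : 2 ≤ n) (σ : Equiv.Perm (Fin n))
    (h : ∀ i, σ i = i ∨ σ i = i - 1) :
    σ = 1 ∨ σ = Equiv.addRight (-1 : Fin n) := by
  by_cases hσ : σ = 1
  · exact Or.inl hσ
  right
  have h1 : (1 : Fin n) ≠ 0 := fin_one_ne_zero' hn
  obtain ⟨i₀, hi₀⟩ : ∃ i, σ i ≠ i := by
    by_contra hc
    push_neg at hc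
    exact hσ (Equiv.ext hc)
  have hi₀' : σ i₀ = i₀ - 1 := (h i₀).resolve_left hi₀
  have key : ∀ k : ℕ, σ (i₀ - (k : Fin n)) = i₀ - (k : Fin n) - 1 := by
    intro k
    induction k with
    | zero => simpa using hi₀'
    | succ k ih =>
      have hcast : ((k + 1 : ℕ) : Fin n) = (k : Fin n) + 1 := by push_cast; ring
      rw [hcast]
      have ha : i₀ - ((k : Fin n) + 1) = i₀ - (k : Fin n) - 1 := by ring
      rw [ha]
      rcases h (i₀ - (k : Fin n) - 1) with hfix | hok
      · exfalso
        have heq : i₀ - (k : Fin n) - 1 = i₀ - (k : Fin n) := σ.injective (by rw [hfix, ih])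
        have : (1 : Fin n) = 0 := by
          have := sub_eq_self.mp heq
          simpa [neg_eq_zero] using this
        exact h1 this
      · exact hok
  refine Equiv.ext fun j => ?_
  have hk := key ((i₀ - j).val)
  rw [Fin.cast_val_eq_self] at hk
  have hj : i₀ - (i₀ - j) = j := by ring
  rw [hj] at hk
  simpa [Equiv.addRight, sub_eq_add_neg] using hk

open Fin.NatCast Fin.CommRing in
lemma det_cyclic {R : Type*} [CommRing R] {n : ℕ} [NeZero n] (hn : 2 ≤ n)
    (A : Matrix (Fin n) (Fin n) R)
    (hA : ∀ i j, j ≠ i → j ≠ i + 1 → A i j = 0) :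
    A.det = ∏ i, A i i + (-1 : R) ^ (n - 1) * ∏ i, A i (i + 1) := by
  have h1 : (1 : Fin n) ≠ 0 := fin_one_ne_zero' hn
  rw [Matrix.det_apply]
  set c : Equiv.Perm (Fin n) := Equiv.addRight (-1 : Fin n) with hc
  have hne : (1 : Equiv.Perm (Fin n)) ≠ c := by
    intro h
    have h0 : (0 : Fin n) = 0 + -1 := congrArg (fun e => (e : Equiv.Perm (Fin n)) 0) h
    rw [zero_add] at h0
    exact h1 (neg_eq_zero.mp h0.symm)
  have hsub : ({1, c} : Finset (Equiv.Perm (Fin n))) ⊆ univ := subset_univ _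
  rw [← Finset.sum_subset hsub ?_]
  · rw [Finset.sum_pair hne]
    have hsign : Equiv.Perm.sign c = (-1 : ℤˣ) ^ (n - 1) := by
      obtain ⟨m, rfl⟩ : ∃ m, n = m + 1 := ⟨n - 1, by omega⟩
      have hcinv : c⁻¹ = finRotate (m + 1) := by
        refine Equiv.ext fun i => ?_
        have hci : c (i + 1) = i := by
          rw [hc, Equiv.coe_addRight]; ring
        rw [finRotate_succ_apply, Equiv.Perm.inv_def, Equiv.symm_apply_eq]
        exact hci.symm
      have := sign_finRotate (m + 1)
      rw [← hcinv] at this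
      simpa using this
    have hprod : ∏ i, A (c i) i = ∏ i, A i (i + 1) := by
      refine Fintype.prod_equiv c (fun i => A (c i) i) (fun i => A i (i + 1)) fun i => ?_
      rw [hc, Equiv.coe_addRight]
      congr 1
      ring
    rw [hsign, hprod]
    have hsm : ∀ x : R, ((-1 : ℤˣ) ^ (n - 1)) • x = (-1 : R) ^ (n - 1) * x := by
      intro x
      rw [Units.smul_def]
      push_cast
      rw [zsmul_eq_mul]
      push_cast
      ring
    rw [hsm]
    simp
  · intro σ _ hσ
    have hmem : ¬(σ = 1 ∨ σ = c) := by
      intro hor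
      rcases hor with h' | h' <;> simp [h'] at hσ
    have hnot : ¬ ∀ i, σ i = i ∨ σ i = i - 1 := fun hall => hmem (perm_classify hn σ hall)
    push_neg at hnot
    obtain ⟨i, hi1, hi2⟩ := hnot
    have hzero : A (σ i) i = 0 := by
      refine hA _ _ (fun h => hi1 h.symm) fun h => hi2 (eq_sub_iff_add_eq.mpr h.symm)
    have hp : ∏ j, A (σ j) j = 0 := Finset.prod_eq_zero (mem_univ i) hzero
    rw [hp, smul_zero]
lemma charpoly_eq {n : ℕ} [NeZero n] (d : Fin n → ℝ) (T : Matrix (Fin n) (Fin n) ℝ)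
    (hTe : ∀ i j, T i j = (if j = i then d i else 0) + (if j = i + 1 then 1 - d i else 0)) :
    (T.map Complex.ofReal).charpoly
      = (∏ i, (X - C (d i : ℂ))) - C (∏ i, (1 - (d i : ℂ))) := by
  set M := T.map Complex.ofReal with hM
  rcases Nat.lt_or_ge n 2 with h2 | h2
  · have hn1 : n = 1 := by have := NeZero.pos n; omega
    subst hn1
    have h00 : T 0 0 = d 0 + (1 - d 0) := by
      rw [hTe 0 0]
      norm_num
    rw [Matrix.charpoly, Matrix.det_fin_one, charmatrix_apply_eq]
    have : M 0 0 = ((d 0 + (1 - d 0) : ℝ) : ℂ) := by rw [hM]; simp [Matrix.map_apply, h00]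
    rw [this]
    simp only [Fin.prod_univ_one]
    push_cast
    rw [map_sub]
    ring
  · have h10 : (1 : Fin n) ≠ 0 := fin_one_ne_zero' h2
    have hne : ∀ i : Fin n, i ≠ i + 1 := fun i h => h10 (left_eq_add.mp h)
    have hT0 : ∀ i j : Fin n, j ≠ i → j ≠ i + 1 → T i j = 0 := by
      intro i j h1 h2'
      rw [hTe i j, if_neg h1, if_neg h2']
      ring
    have hA : ∀ i j : Fin n, j ≠ i → j ≠ i + 1 → (charmatrix M) i j = 0 := by
      intro i j h1 h2'
      rw [charmatrix_apply_ne _ _ _ (fun h => h1 h.symm)]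
      rw [hM]
      simp [Matrix.map_apply, hT0 i j h1 h2']
    rw [Matrix.charpoly, det_cyclic h2 _ hA]
    have hTd : ∀ i : Fin n, T i i = d i := by
      intro i
      rw [hTe i i, if_pos rfl, if_neg (hne i)]
      ring
    have hTo : ∀ i : Fin n, T i (i + 1) = 1 - d i := by
      intro i
      rw [hTe i (i + 1), if_neg (fun h => hne i h.symm), if_pos rfl]
      ring
    have hdiag : ∀ i : Fin n, (charmatrix M) i i = X - C ((d i : ℂ)) := by
      intro i
      rw [charmatrix_apply_eq]
      congr 1
      rw [hM]
      simp [Matrix.map_apply, hTd i]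
    have hoff : ∀ i : Fin n, (charmatrix M) i (i + 1) = -C ((1 : ℂ) - (d i : ℂ)) := by
      intro i
      rw [charmatrix_apply_ne _ _ _ (hne i)]
      congr 1
      rw [hM]
      simp only [Matrix.map_apply, hTo i]
      push_cast
      ring
    simp only [hdiag, hoff]
    have hprodneg : ∏ i : Fin n, (-C ((1:ℂ) - (d i : ℂ))) = (-1 : ℂ[X]) ^ n * C (∏ i, ((1:ℂ) - (d i:ℂ))) := by
      rw [show (fun i : Fin n => -C ((1:ℂ) - (d i:ℂ))) = fun i => (-1 : ℂ[X]) * C ((1:ℂ) - (d i:ℂ)) from funext fun i => by ring]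
      rw [Finset.prod_mul_distrib, Finset.prod_const, map_prod]
      simp
    rw [hprodneg]
    have hsgn : (-1 : ℂ[X]) ^ (n - 1) * ((-1 : ℂ[X]) ^ n) = -1 := by
      rw [← pow_add]
      exact Odd.neg_one_pow ⟨n - 1, by omega⟩
    rw [← mul_assoc, hsgn]
    push_cast
    ring
noncomputable def P (s : Multiset ℂ) : ℂ[X] := (s.map (fun a => X - C a)).prod

lemma P_cons (a : ℂ) (s : Multiset ℂ) : P (a ::ₘ s) = (X - C a) * P s := by
  simp [P]

lemma eval_P (s : Multiset ℂ) (x : ℂ) : (P s).eval x = (s.map (fun a => x - a)).prod := by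
  induction s using Multiset.induction_on with
  | empty => simp [P]
  | cons a t ih => simp [P_cons, ih]

lemma eval_derivative_P (s : Multiset ℂ) (x : ℂ) (h : ∀ a ∈ s, x - a ≠ 0) :
    (derivative (P s)).eval x = (P s).eval x * (s.map (fun a => (x - a)⁻¹)).sum := by
  induction s using Multiset.induction_on with
  | empty => simp [P]
  | cons a t ih =>
    have ha : x - a ≠ 0 := h a (Multiset.mem_cons_self a t)
    have ih' := ih (fun b hb => h b (Multiset.mem_cons_of_mem hb))
    rw [P_cons]
    simp only [derivative_mul, eval_add, eval_mul, Multiset.map_cons, Multiset.sum_cons,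
      eval_sub, eval_X, eval_C, ih', derivative_sub, derivative_X, derivative_C, sub_zero,
      eval_one, one_mul, eval_P, Multiset.prod_cons]
    generalize (Multiset.map (fun a => x - a) t).prod = p
    generalize (Multiset.map (fun a => (x - a)⁻¹) t).sum = sv
    field_simp

lemma eval_derivative2_P (s : Multiset ℂ) (x : ℂ) (h : ∀ a ∈ s, x - a ≠ 0) :
    (derivative (derivative (P s))).eval x =
      (P s).eval x * (((s.map (fun a => (x - a)⁻¹)).sum) ^ 2
        - ((s.map (fun a => ((x - a)⁻¹) ^ 2)).sum)) := by
  induction s using Multiset.induction_on with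
  | empty => simp [P]
  | cons a t ih =>
    have ha : x - a ≠ 0 := h a (Multiset.mem_cons_self a t)
    have ht : ∀ b ∈ t, x - b ≠ 0 := fun b hb => h b (Multiset.mem_cons_of_mem hb)
    have ih' := ih ht
    have h1 := eval_derivative_P t x ht
    rw [P_cons]
    have hD : derivative (derivative ((X - C a) * P t))
        = 2 * derivative (P t) + (X - C a) * derivative (derivative (P t)) := by
      rw [derivative_mul, derivative_add, derivative_mul, derivative_mul]
      simp only [derivative_sub, derivative_X, derivative_C, sub_zero, one_mul, derivative_one,
        zero_mul, zero_add]
      ring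
    rw [hD]
    simp only [eval_add, eval_mul, eval_sub, eval_X, eval_C, eval_ofNat, Multiset.map_cons,
      Multiset.sum_cons, ih', h1, eval_P, Multiset.prod_cons]
    generalize (Multiset.map (fun a => x - a) t).prod = p
    generalize (Multiset.map (fun a => (x - a)⁻¹) t).sum = sv
    generalize (Multiset.map (fun a => (x - a)⁻¹ ^ 2) t).sum = sv2
    have hia : (x - a) * (x - a)⁻¹ = 1 := mul_inv_cancel₀ ha
    field_simp
    ring
lemma main_roots {n : ℕ} [NeZero n] (d : Fin n → ℝ) (hd : ∀ j, d j < 1)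
    (p : Polynomial ℂ)
    (hp : p = (∏ i, (X - C ((d i : ℂ)))) - C (∏ i, (1 - (d i : ℂ)))) :
    p.roots.count 1 = 1 ∧
    ((p.roots.erase 1).map (fun z => (1 - z)⁻¹)).sum
      = Complex.ofReal ((1 / (2 * ∑ j, (1 - d j)⁻¹)) *
          ((∑ j, (1 - d j)⁻¹) ^ 2 - ∑ j, ((1 - d j)⁻¹) ^ 2)) := by
  -- basic positivity
  have hdpos : ∀ j, (0:ℝ) < 1 - d j := fun j => by linarith [hd j]
  set Sr : ℝ := ∑ j, (1 - d j)⁻¹ with hSr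
  set S2r : ℝ := ∑ j, ((1 - d j)⁻¹) ^ 2 with hS2r
  have hSrpos : 0 < Sr := Finset.sum_pos (fun j _ => inv_pos.mpr (hdpos j)) univ_nonempty
  -- complex quantities
  set δ : Multiset ℂ := univ.val.map (fun i : Fin n => (d i : ℂ)) with hδdef
  have hPδ : P δ = ∏ i, (X - C ((d i : ℂ))) := by
    rw [P, hδdef, Multiset.map_map, Finset.prod_eq_multiset_prod]
    rfl
  have hδne : ∀ a ∈ δ, (1:ℂ) - a ≠ 0 := by
    intro a ha
    rw [hδdef, Multiset.mem_map] at ha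
    obtain ⟨i, _, rfl⟩ := ha
    rw [show (1:ℂ) - (d i : ℂ) = ((1 - d i : ℝ) : ℂ) by push_cast; ring]
    exact_mod_cast Complex.ofReal_ne_zero.mpr (ne_of_gt (hdpos i))
  set cc : ℂ := ∏ i, (1 - (d i : ℂ)) with hcc_def
  have hccne : cc ≠ 0 := by
    rw [hcc_def]
    exact Finset.prod_ne_zero_iff.mpr fun i _ => hδne _ (by
      rw [hδdef, Multiset.mem_map]; exact ⟨i, by simp, rfl⟩)
  set S : ℂ := (δ.map (fun a => ((1:ℂ) - a)⁻¹)).sum with hSdef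
  set S2 : ℂ := (δ.map (fun a => (((1:ℂ) - a)⁻¹) ^ 2)).sum with hS2def
  have hSre : S = (Sr : ℂ) := by
    rw [hSdef, hδdef, Multiset.map_map, ← Finset.sum_eq_multiset_sum, hSr]
    push_cast
    simp [Function.comp]
  have hS2re : S2 = (S2r : ℂ) := by
    rw [hS2def, hδdef, Multiset.map_map, ← Finset.sum_eq_multiset_sum, hS2r]
    push_cast
    simp [Function.comp]
  have hSne : S ≠ 0 := by rw [hSre]; exact_mod_cast ne_of_gt hSrpos
  have hPδ1 : (P δ).eval 1 = cc := by
    rw [eval_P, hδdef, Multiset.map_map, hcc_def, Finset.prod_eq_multiset_prod]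
    rfl
  -- monicity
  have hQmonic : (∏ i, (X - C ((d i : ℂ)))).Monic :=
    monic_prod_of_monic _ _ fun i _ => monic_X_sub_C _
  have hQdeg : (0:WithBot ℕ) < (∏ i, (X - C ((d i : ℂ)))).degree := by
    rw [degree_prod]
    simp only [degree_X_sub_C]
    rw [Finset.sum_const, Finset.card_univ, Fintype.card_fin]
    have : (0:WithBot ℕ) < (n:WithBot ℕ) := by
      exact_mod_cast Nat.cast_pos.mpr (NeZero.pos n)
    simpa using this
  have hpmonic : p.Monic := by
    rw [hp, sub_eq_add_neg]
    exact hQmonic.add_of_left (lt_of_le_of_lt (le_trans (degree_neg _).le degree_C_le) hQdeg)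
  have hp0 : p ≠ 0 := hpmonic.ne_zero
  -- eval at 1
  have heval1 : p.eval 1 = 0 := by
    rw [hp]
    simp [eval_prod, hcc_def]
  -- derivative evals
  have hder : derivative p = derivative (P δ) := by
    rw [hp, ← hPδ, derivative_sub, derivative_C, sub_zero]
  have hp'1 : (derivative p).eval 1 = cc * S := by
    rw [hder, eval_derivative_P δ 1 hδne, hPδ1, hSdef]
  have hp''1 : (derivative (derivative p)).eval 1 = cc * (S ^ 2 - S2) := by
    rw [hder, eval_derivative2_P δ 1 hδne, hPδ1, hSdef, hS2def]
  have hcSne : cc * S ≠ 0 := mul_ne_zero hccne hSne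
  -- membership & count
  have hmem : (1:ℂ) ∈ p.roots := by
    rw [mem_roots hp0]
    exact heval1
  have hcount : p.roots.count 1 = 1 := by
    refine le_antisymm ?_ (Multiset.one_le_count_iff_mem.mpr hmem)
    by_contra hcnt
    push_neg at hcnt
    have h2 : 2 ≤ rootMultiplicity 1 p := by
      rw [← count_roots]; omega
    have hdvd : (X - C (1:ℂ)) ^ 2 ∣ p :=
      dvd_trans (pow_dvd_pow _ h2) (pow_rootMultiplicity_dvd p 1)
    obtain ⟨g, hg⟩ := hdvd
    have : (derivative p).eval 1 = 0 := by
      rw [hg]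
      simp [derivative_mul, derivative_pow]
    rw [hp'1] at this
    exact hcSne this
  refine ⟨hcount, ?_⟩
  -- factorization via roots
  have hsplit : p = P p.roots :=
    (IsAlgClosed.splits p).eq_prod_roots_of_monic hpmonic
  have hcons : (1:ℂ) ::ₘ p.roots.erase 1 = p.roots := Multiset.cons_erase hmem
  set m : Multiset ℂ := p.roots.erase 1 with hm
  have hpfact : p = (X - C 1) * P m := by
    conv_lhs => rw [hsplit, ← hcons, P_cons]
  have hmnot : ∀ a ∈ m, (1:ℂ) - a ≠ 0 := by
    intro a ham h0
    have ha1 : (1:ℂ) = a := sub_eq_zero.mp h0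
    rw [← ha1] at ham
    have hc0 : p.roots.count 1 - 1 = 0 := by omega
    have := Multiset.count_erase_self (1:ℂ) p.roots
    rw [hcount] at this
    have hm0 : m.count 1 = 0 := by rw [hm, this]
    exact absurd (Multiset.one_le_count_iff_mem.mpr ham) (by omega)
  set Qv : ℂ := (P m).eval 1 with hQvdef
  set K : ℂ := (m.map fun a => ((1:ℂ) - a)⁻¹).sum with hKdef
  have hq' : (derivative (P m)).eval 1 = Qv * K := eval_derivative_P m 1 hmnot
  have hp'root : (derivative p).eval 1 = Qv := by
    rw [hpfact, derivative_mul]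
    simp only [derivative_sub, derivative_X, derivative_C, sub_zero, one_mul, eval_add,
      eval_mul, eval_sub, eval_X, eval_C, sub_self, zero_mul, add_zero]
    all_goals ring
  have hQv : Qv = cc * S := by rw [← hp'root, hp'1]
  have hQvne : Qv ≠ 0 := hQv ▸ hcSne
  have hp''root : (derivative (derivative p)).eval 1 = 2 * (Qv * K) := by
    rw [hpfact]
    have hD : derivative (derivative ((X - C (1:ℂ)) * P m))
        = 2 * derivative (P m) + (X - C 1) * derivative (derivative (P m)) := by
      rw [derivative_mul, derivative_add, derivative_mul, derivative_mul]
      simp only [derivative_sub, derivative_X, derivative_C, sub_zero, one_mul, derivative_one,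
        zero_mul, zero_add]
      ring
    rw [hD]
    simp only [eval_add, eval_mul, eval_sub, eval_X, eval_C, eval_ofNat, hq', sub_self,
      zero_mul, add_zero]
    all_goals ring
  have heq : 2 * (Qv * K) = cc * (S ^ 2 - S2) := by rw [← hp''root, hp''1]
  have hKeq : K * (2 * S) = S ^ 2 - S2 := by
    apply mul_left_cancel₀ hccne
    calc cc * (K * (2 * S)) = 2 * ((cc * S) * K) := by ring
    _ = 2 * (Qv * K) := by rw [hQv]
    _ = cc * (S ^ 2 - S2) := heq
  have h2S : (2:ℂ) * S ≠ 0 := mul_ne_zero two_ne_zero hSne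
  have hK : K = (S ^ 2 - S2) / (2 * S) := (eq_div_iff h2S).mpr hKeq
  rw [hK, hSre, hS2re]
  have hSrne : Sr ≠ 0 := ne_of_gt hSrpos
  push_cast
  field_simp
end KemenyAux

open KemenyAux Polynomial in
theorem kemeny_diag_plus_cycle
    (n : ℕ) [NeZero n] (d : Fin n → ℝ) (hd : ∀ j, 0 ≤ d j ∧ d j < 1)
    (C : Matrix (Fin n) (Fin n) ℝ)
    (hC : ∀ i j : Fin n, C i j = if j = i + 1 then 1 else 0)
    (T : Matrix (Fin n) (Fin n) ℝ)
    (hT : T = Matrix.diagonal d + (1 - Matrix.diagonal d) * C) :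
    IsStochastic T ∧
    (Matrix.charpoly (T.map (Complex.ofReal))).roots.count 1 = 1 ∧
    kemeny T = (1 / (2 * ∑ j, (1 - d j)⁻¹)) *
      ((∑ j, (1 - d j)⁻¹) ^ 2 - ∑ j, ((1 - d j)⁻¹) ^ 2) := by
  have hTe : ∀ i j, T i j = (if j = i then d i else 0) + (if j = i + 1 then 1 - d i else 0) := by
    intro i j
    have h1 : (1 - Matrix.diagonal d) = Matrix.diagonal (fun i => 1 - d i) := by
      rw [← Matrix.diagonal_one, Matrix.diagonal_sub]
    rw [hT, Matrix.add_apply, h1, Matrix.diagonal_mul, hC, Matrix.diagonal_apply]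
    split_ifs with hh1 hh2 hh2 <;> simp_all [eq_comm] <;> ring
  have hroots := main_roots d (fun j => (hd j).2) _ (charpoly_eq d T hTe)
  refine ⟨⟨?_, ?_⟩, hroots.1, ?_⟩
  · intro i j
    rw [hTe i j]
    have := hd i
    apply add_nonneg <;> split_ifs <;> linarith
  · intro i
    simp only [hTe]
    rw [Finset.sum_add_distrib, Finset.sum_ite_eq' univ i (fun _ => d i),
      Finset.sum_ite_eq' univ (i + 1) (fun _ => 1 - d i)]
    simp
  · rw [kemeny, hroots.2, Complex.ofReal_re]
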